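/- Let E and F be nonempty convex sets in ℝⁿ containing the origin such that every vector u ∈ ℝⁿ is uniquely expressible as u = y + z with y ∈ E and z ∈ F (uniqueness meaning: if u = y₁ + z₁ = y₂ + z₂ with y₁, y₂ ∈ E and z₁, z₂ ∈ F, then y₁ = y₂ and z₁ = z₂). If the origin belongs to the relative interior of E or to the relative interior of F, then E and F are complementary linear subspaces of ℝⁿ: both are linear subspaces, E + F = ℝⁿ, and E ∩ F = {0}. -/
import Mathlib


open Pointwise

theorem aux_convex_subgroup_submodule {V : Type*} [AddCommGroup V] [Module ℝ V] {E : Set V}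
    (hconv : Convex ℝ E) (h0 : (0:V) ∈ E)
    (hadd : ∀ a ∈ E, ∀ b ∈ E, a + b ∈ E)
    (hneg : ∀ a ∈ E, -a ∈ E) :
    ∃ S : Submodule ℝ V, E = (S : Set V) := by
  have hnsmul : ∀ (k : ℕ) (a : V), a ∈ E → (k : ℝ) • a ∈ E := by
    intro k a ha
    induction k with
    | zero => simpa using h0
    | succ k ih => rw [Nat.cast_succ, add_smul, one_smul]; exact hadd _ ih _ ha
  have hsmulpos : ∀ (c : ℝ), 0 ≤ c → ∀ a ∈ E, c • a ∈ E := by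
    intro c hc a ha
    rcases eq_or_lt_of_le hc with h | h
    · simpa [← h] using h0
    · set k := ⌈c⌉₊ with hkdef
      have hk : c ≤ (k : ℝ) := Nat.le_ceil c
      have hk0 : (0:ℝ) < (k : ℝ) := lt_of_lt_of_le h hk
      have h1 : (c / (k:ℝ)) • a ∈ E :=
        hconv.smul_mem_of_zero_mem h0 ha
          ⟨by positivity, div_le_one_of_le₀ hk hk0.le⟩
      have heq : c • a = (k:ℝ) • ((c/(k:ℝ)) • a) := by
        rw [smul_smul]; congr 1; field_simp
      rw [heq]; exact hnsmul k _ h1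
  refine ⟨{ carrier := E, add_mem' := fun ha hb => hadd _ ha _ hb, zero_mem' := h0,
            smul_mem' := ?_ }, rfl⟩
  intro c a ha
  rcases le_or_gt 0 c with h | h
  · exact hsmulpos c h a ha
  · have heq : c • a = (-c) • (-a) := by simp
    rw [heq]; exact hsmulpos _ (by linarith) _ (hneg a ha)

theorem complementary_subspaces_of_unique_decomposition
    (n : ℕ) (E F : Set (EuclideanSpace ℝ (Fin n)))
    (hEne : E.Nonempty) (hEconv : Convex ℝ E)
    (hFne : F.Nonempty) (hFconv : Convex ℝ F)
    (hE0 : (0 : EuclideanSpace ℝ (Fin n)) ∈ E)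
    (hF0 : (0 : EuclideanSpace ℝ (Fin n)) ∈ F)
    (hex : ∀ u : EuclideanSpace ℝ (Fin n), ∃ y ∈ E, ∃ z ∈ F, u = y + z)
    (huniq : ∀ u y₁ z₁ y₂ z₂ : EuclideanSpace ℝ (Fin n),
      y₁ ∈ E → z₁ ∈ F → y₂ ∈ E → z₂ ∈ F →
      u = y₁ + z₁ → u = y₂ + z₂ → y₁ = y₂ ∧ z₁ = z₂)
    (hri : (0 : EuclideanSpace ℝ (Fin n)) ∈ intrinsicInterior ℝ E ∨
      (0 : EuclideanSpace ℝ (Fin n)) ∈ intrinsicInterior ℝ F) :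
    (∃ S : Submodule ℝ (EuclideanSpace ℝ (Fin n)), E = (S : Set _)) ∧
      (∃ S : Submodule ℝ (EuclideanSpace ℝ (Fin n)), F = (S : Set _)) ∧
      E + F = Set.univ ∧ E ∩ F = {0} := by
  have half : ∀ a b : EuclideanSpace ℝ (Fin n),
      (1/2 : ℝ) • (a + b) = (1/2 : ℝ) • a + (1/2 : ℝ) • b := fun a b => smul_add _ _ _
  have hhalfmem : ∀ (G : Set (EuclideanSpace ℝ (Fin n))), Convex ℝ G →
      (0 : EuclideanSpace ℝ (Fin n)) ∈ G → ∀ x ∈ G, (1/2 : ℝ) • x ∈ G := by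
    intro G hG h0 x hx
    exact hG.smul_mem_of_zero_mem h0 hx ⟨by norm_num, by norm_num⟩
  have hmid : ∀ (G : Set (EuclideanSpace ℝ (Fin n))), Convex ℝ G →
      ∀ a ∈ G, ∀ b ∈ G, (1/2 : ℝ) • (a + b) ∈ G := by
    intro G hG a ha b hb
    rw [half]
    exact hG ha hb (by norm_num) (by norm_num) (by norm_num)
  -- additivity of E
  have haddE : ∀ a ∈ E, ∀ b ∈ E, a + b ∈ E := by
    intro a ha b hb
    obtain ⟨y, hy, z, hz, hab⟩ := hex (a + b)
    have hm : (1/2 : ℝ) • (a + b) ∈ E := hmid E hEconv a ha b hb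
    have hdec : (1/2 : ℝ) • (a + b) = (1/2 : ℝ) • y + (1/2 : ℝ) • z := by
      rw [hab, half]
    have := huniq ((1/2 : ℝ) • (a + b)) ((1/2 : ℝ) • (a+b)) 0 ((1/2 : ℝ) • y)
      ((1/2 : ℝ) • z) hm hF0 (hhalfmem E hEconv hE0 y hy) (hhalfmem F hFconv hF0 z hz)
      (add_zero _).symm hdec
    have hz0 : z = 0 := by
      have := this.2.symm
      have h2 : (2 : ℝ) • ((1/2 : ℝ) • z) = (2:ℝ) • (0 : EuclideanSpace ℝ (Fin n)) := by
        rw [this]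
      simpa [smul_smul] using h2
    rw [hab, hz0, add_zero]; exact hy
  have haddF : ∀ a ∈ F, ∀ b ∈ F, a + b ∈ F := by
    intro a ha b hb
    obtain ⟨y, hy, z, hz, hab⟩ := hex (a + b)
    have hm : (1/2 : ℝ) • (a + b) ∈ F := hmid F hFconv a ha b hb
    have hdec : (1/2 : ℝ) • (a + b) = (1/2 : ℝ) • y + (1/2 : ℝ) • z := by
      rw [hab, half]
    have := huniq ((1/2 : ℝ) • (a + b)) 0 ((1/2 : ℝ) • (a+b)) ((1/2 : ℝ) • y)
      ((1/2 : ℝ) • z) hE0 hm (hhalfmem E hEconv hE0 y hy) (hhalfmem F hFconv hF0 z hz)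
      (zero_add _).symm hdec
    have hy0 : y = 0 := by
      have := this.1.symm
      have h2 : (2 : ℝ) • ((1/2 : ℝ) • y) = (2:ℝ) • (0 : EuclideanSpace ℝ (Fin n)) := by
        rw [this]
      simpa [smul_smul] using h2
    rw [hab, hy0, zero_add]; exact hz
  -- negation
  have hnegE : ∀ a ∈ E, -a ∈ E := by
    intro a ha
    obtain ⟨y, hy, z, hz, hna⟩ := hex (-a)
    have key : (0 : EuclideanSpace ℝ (Fin n)) = (1/2 : ℝ) • (a + y) + (1/2 : ℝ) • z := by
      have h0 : a + y + z = 0 := by rw [add_assoc, ← hna]; simp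
      rw [← half, h0]; simp
    have := huniq 0 0 0 ((1/2 : ℝ) • (a + y)) ((1/2 : ℝ) • z) hE0 hF0
      (hmid E hEconv a ha y hy) (hhalfmem F hFconv hF0 z hz) (by simp) key
    have hz0 : z = 0 := by
      have h := this.2.symm
      have h2 : (2 : ℝ) • ((1/2 : ℝ) • z) = (2:ℝ) • (0 : EuclideanSpace ℝ (Fin n)) := by
        rw [h]
      simpa [smul_smul] using h2
    rw [hna, hz0, add_zero]; exact hy
  have hnegF : ∀ a ∈ F, -a ∈ F := by
    intro a ha
    obtain ⟨y, hy, z, hz, hna⟩ := hex (-a)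
    have key : (0 : EuclideanSpace ℝ (Fin n)) = (1/2 : ℝ) • y + (1/2 : ℝ) • (a + z) := by
      rw [← half]
      have : y + (a + z) = a + (y + z) := by abel
      rw [this, ← hna]; simp
    have := huniq 0 0 0 ((1/2 : ℝ) • y) ((1/2 : ℝ) • (a + z)) hE0 hF0
      (hhalfmem E hEconv hE0 y hy) (hmid F hFconv a ha z hz) (by simp) key
    have hy0 : y = 0 := by
      have h := this.1.symm
      have h2 : (2 : ℝ) • ((1/2 : ℝ) • y) = (2:ℝ) • (0 : EuclideanSpace ℝ (Fin n)) := by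
        rw [h]
      simpa [smul_smul] using h2
    rw [hna, hy0, zero_add]; exact hz
  refine ⟨aux_convex_subgroup_submodule hEconv hE0 haddE hnegE,
    aux_convex_subgroup_submodule hFconv hF0 haddF hnegF, ?_, ?_⟩
  · ext u
    simp only [Set.mem_univ, iff_true, Set.mem_add]
    obtain ⟨y, hy, z, hz, hu⟩ := hex u
    exact ⟨y, hy, z, hz, hu.symm⟩
  · ext x
    simp only [Set.mem_inter_iff, Set.mem_singleton_iff]
    constructor
    · rintro ⟨hxE, hxF⟩
      exact (huniq x x 0 0 x hxE hF0 hE0 hxF (add_zero x).symm (zero_add x).symm).1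
    · rintro rfl; exact ⟨hE0, hF0⟩
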